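/- Let A be a p × p real symmetric matrix and let X be a p × p symmetric positive semidefinite matrix with tr(X) = 1. Let λ₁ be the largest eigenvalue of X and ẑ a corresponding unit-length eigenvector. Then ⟨A, X⟩ ≤ λ₁·(ẑᵀ·A·ẑ) + (1 − λ₁)·λ_max(A), where λ_max(A) is the largest eigenvalue of A. -/

import Mathlib

open MeasureTheory ProbabilityTheory Filter
open scoped ENNReal NNReal

noncomputable section

/-- Sample space of the single-spike model: the `u_i`'s and the noise vectors `ξ_i`. -/
abbrev SpikeOmega (n p : ℕ) : Type := (Fin n → ℝ) × (Fin n → Fin p → ℝ)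

/-- The probability measure of the single-spike model: all `u_i` and all entries of the `ξ_i`
are i.i.d. standard Gaussians. -/
noncomputable def spikeMeasure (n p : ℕ) : Measure (SpikeOmega n p) :=
  (Measure.pi fun _ : Fin n => gaussianReal 0 1).prod
    (Measure.pi fun _ : Fin n => Measure.pi fun _ : Fin p => gaussianReal 0 1)

instance (n p : ℕ) : IsProbabilityMeasure (spikeMeasure n p) := by
  unfold spikeMeasure; infer_instance

/-- `z` is a `k`-sparse spike: a unit vector with exactly `k` nonzero entries,
each equal to `±1/√k`. -/
def IsSpike (p k : ℕ) (z : Fin p → ℝ) : Prop :=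
  (∀ j, z j = 0 ∨ z j = 1 / Real.sqrt k ∨ z j = -(1 / Real.sqrt k)) ∧
    {j | z j ≠ 0}.ncard = k

/-- The `i`-th sample `x_i = √β · u_i · z + ξ_i` of the single-spike model. -/
noncomputable def sample {n p : ℕ} (β : ℝ) (z : Fin p → ℝ) (ω : SpikeOmega n p)
    (i : Fin n) (j : Fin p) : ℝ :=
  Real.sqrt β * ω.1 i * z j + ω.2 i j

/-- Sample covariance matrix `Σ̂ = (1/n) ∑ x_i x_iᵀ` of the single-spike model. -/
noncomputable def sampleCov (n p : ℕ) (β : ℝ) (z : Fin p → ℝ) (ω : SpikeOmega n p) :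
    Matrix (Fin p) (Fin p) ℝ :=
  Matrix.of fun a b => (1 / (n : ℝ)) * ∑ i : Fin n, sample β z ω i a * sample β z ω i b

/-- Frobenius inner product `⟨A, B⟩ = ∑_{i,j} A_{ij} B_{ij}`. -/
noncomputable def frobInner {p : ℕ} (A B : Matrix (Fin p) (Fin p) ℝ) : ℝ :=
  ∑ i, ∑ j, A i j * B i j

/-- Absolute-sum norm `‖X‖_S = ∑_{i,j} |X_{ij}|`. -/
noncomputable def absSum {p : ℕ} (X : Matrix (Fin p) (Fin p) ℝ) : ℝ :=
  ∑ i, ∑ j, |X i j|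

/-- Feasibility for the SDP: `X` is symmetric PSD, has trace one, and `‖X‖_S ≤ k`. -/
def SdpFeasible {p : ℕ} (k : ℕ) (X : Matrix (Fin p) (Fin p) ℝ) : Prop :=
  X.PosSemidef ∧ X.trace = 1 ∧ absSum X ≤ (k : ℝ)

/-- `X` is an optimal solution of the SDP `max ⟨S, X⟩` over the feasible set. -/
def SdpOptimal {p : ℕ} (k : ℕ) (S X : Matrix (Fin p) (Fin p) ℝ) : Prop :=
  SdpFeasible k X ∧ ∀ Y, SdpFeasible k Y → frobInner S Y ≤ frobInner S X

/-- The largest eigenvalue of a matrix (the supremum of its eigenvalues). -/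
noncomputable def lambdaMax {p : ℕ} (A : Matrix (Fin p) (Fin p) ℝ) : ℝ :=
  sSup {μ : ℝ | ∃ v : Fin p → ℝ, v ≠ 0 ∧ A.mulVec v = μ • v}

/-- The spectral norm `‖A‖ = √(λ_max (A Aᵀ))`. -/
noncomputable def specNorm {p : ℕ} (A : Matrix (Fin p) (Fin p) ℝ) : ℝ :=
  Real.sqrt (lambdaMax (A * A.transpose))

end

open Matrix in
private lemma frob_psd_nonneg {p : ℕ} {M Y : Matrix (Fin p) (Fin p) ℝ}
    (hM : M.PosSemidef) (hY : Y.PosSemidef) :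
    0 ≤ ∑ i, ∑ j, M i j * Y i j := by
  obtain ⟨B, rfl⟩ := by
    open scoped MatrixOrder in exact CStarAlgebra.nonneg_iff_eq_star_mul_self.mp hY.nonneg
  rw [Matrix.star_eq_conjTranspose]
  have step : ∑ i, ∑ j, M i j * (Bᴴ * B) i j
      = ∑ k, ∑ i, ∑ j, M i j * (B k i * B k j) := by
    simp only [Matrix.mul_apply, Matrix.conjTranspose_apply, star_trivial, Finset.mul_sum]
    rw [show (∑ i, ∑ j, ∑ k, M i j * (B k i * B k j))
        = ∑ i, ∑ k, ∑ j, M i j * (B k i * B k j) from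
      Finset.sum_congr rfl fun i _ => Finset.sum_comm]
    exact Finset.sum_comm
  rw [step]
  refine Finset.sum_nonneg fun k _ => ?_
  have h := hM.dotProduct_mulVec_nonneg (fun i => B k i)
  simp only [star_trivial, dotProduct, Matrix.mulVec, Finset.mul_sum] at h
  calc (0:ℝ) ≤ ∑ i, ∑ j, B k i * (M i j * B k j) := h
    _ = ∑ i, ∑ j, M i j * (B k i * B k j) := by
        exact Finset.sum_congr rfl fun i _ => Finset.sum_congr rfl fun j _ => by ring

open Matrix in
private lemma rayleigh_le {p : ℕ} (hp : 0 < p) {A : Matrix (Fin p) (Fin p) ℝ}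
    (hA : A.IsHermitian) (v : Fin p → ℝ) :
    v ⬝ᵥ A *ᵥ v ≤ lambdaMax A * (v ⬝ᵥ v) := by
  haveI : NeZero p := ⟨hp.ne'⟩
  classical
  set U : Matrix (Fin p) (Fin p) ℝ := (hA.eigenvectorUnitary : Matrix (Fin p) (Fin p) ℝ) with hU
  have hUstar : star U = Uᵀ := by
    rw [Matrix.star_eq_conjTranspose, Matrix.conjTranspose_eq_transpose_of_trivial]
  have huniv : (Finset.univ : Finset (Fin p)).Nonempty := Finset.univ_nonempty
  set μ : ℝ := Finset.univ.sup' huniv hA.eigenvalues with hμ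
  have key : ∀ x : Fin p → ℝ, x ⬝ᵥ A *ᵥ x ≤ μ * (x ⬝ᵥ x) := by
    intro x
    set w : Fin p → ℝ := x ᵥ* U with hw
    have h1 : x ⬝ᵥ A *ᵥ x = ∑ i, hA.eigenvalues i * (w i * w i) := by
      conv_lhs => rw [hA.spectral_theorem, Unitary.conjStarAlgAut_apply]
      rw [← Matrix.mulVec_mulVec, ← Matrix.mulVec_mulVec, hUstar, Matrix.mulVec_transpose,
        Matrix.dotProduct_mulVec x U, ← hw]
      simp [dotProduct, Matrix.mulVec_diagonal, Function.comp]
      ring_nf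
      exact Finset.sum_congr rfl fun i _ => by ring
    have h2 : x ⬝ᵥ x = ∑ i, w i * w i := by
      have hUU : U * Uᵀ = 1 := by
        rw [← hUstar]; exact (Matrix.mem_unitaryGroup_iff).mp (hA.eigenvectorUnitary).2
      have : w ⬝ᵥ w = x ⬝ᵥ x := by
        rw [hw, ← Matrix.dotProduct_mulVec, ← Matrix.mulVec_transpose, Matrix.mulVec_mulVec,
          hUU, Matrix.one_mulVec]
      rw [← this]; rfl
    rw [h1, h2, Finset.mul_sum]
    refine Finset.sum_le_sum fun i _ => ?_
    exact mul_le_mul_of_nonneg_right (Finset.le_sup' _ (Finset.mem_univ i)) (mul_self_nonneg _)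
  have hnn : ∀ u : Fin p → ℝ, 0 ≤ u ⬝ᵥ u := fun u =>
    Finset.sum_nonneg fun i _ => mul_self_nonneg _
  have hmem : μ ∈ {μ' : ℝ | ∃ v : Fin p → ℝ, v ≠ 0 ∧ A.mulVec v = μ' • v} := by
    obtain ⟨i₀, -, hi₀⟩ := Finset.exists_mem_eq_sup' huniv hA.eigenvalues
    have hv := hA.mulVec_eigenvectorBasis i₀
    refine ⟨_, ?_, by rw [hv, hμ, hi₀]⟩
    have := hA.eigenvectorBasis.orthonormal.ne_zero i₀
    intro hc
    exact this (by ext j; exact congr_fun hc j)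
  have hub : ∀ μ' ∈ {μ' : ℝ | ∃ v : Fin p → ℝ, v ≠ 0 ∧ A.mulVec v = μ' • v}, μ' ≤ μ := by
    rintro μ' ⟨u, hu, huA⟩
    have h1 : u ⬝ᵥ A *ᵥ u = μ' * (u ⬝ᵥ u) := by
      rw [huA, dotProduct_smul, smul_eq_mul]
    have h2 : 0 < u ⬝ᵥ u := by
      rcases lt_or_eq_of_le (hnn u) with h | h
      · exact h
      · exact absurd ((dotProduct_self_eq_zero).mp h.symm) hu
    have := key u
    rw [h1] at this
    exact le_of_mul_le_mul_right (by linarith) h2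
  have hle : μ ≤ lambdaMax A := le_csSup ⟨μ, hub⟩ hmem
  exact (key v).trans (mul_le_mul_of_nonneg_right hle (hnn v))

open Matrix in
private lemma psd_sub_spike {p : ℕ} {X : Matrix (Fin p) (Fin p) ℝ} (hX : X.PosSemidef)
    {l : ℝ} {z : Fin p → ℝ} (hzz : z ⬝ᵥ z = 1) (heig : X *ᵥ z = l • z) :
    (X - l • Matrix.of fun a b => z a * z b).PosSemidef := by
  have hXT : Xᵀ = X := by
    rw [← Matrix.conjTranspose_eq_transpose_of_trivial]; exact hX.1
  refine Matrix.PosSemidef.of_dotProduct_mulVec_nonneg ?_ ?_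
  · rw [Matrix.IsHermitian, Matrix.conjTranspose_eq_transpose_of_trivial, Matrix.transpose_sub,
      hXT, Matrix.transpose_smul]
    congr 1
    ext a b
    simp [mul_comm]
  · intro v
    rw [star_trivial]
    have hzXv : z ⬝ᵥ X *ᵥ v = l * (z ⬝ᵥ v) := by
      rw [Matrix.dotProduct_mulVec, ← Matrix.mulVec_transpose, hXT, heig,
        smul_dotProduct, smul_eq_mul]
    have h0 := hX.dotProduct_mulVec_nonneg (v - (z ⬝ᵥ v) • z)
    rw [star_trivial] at h0
    have hexp : (v - (z ⬝ᵥ v) • z) ⬝ᵥ X *ᵥ (v - (z ⬝ᵥ v) • z)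
        = v ⬝ᵥ X *ᵥ v - l * ((z ⬝ᵥ v) * (z ⬝ᵥ v)) := by
      simp only [Matrix.mulVec_sub, Matrix.mulVec_smul, heig, sub_dotProduct,
        dotProduct_sub, smul_dotProduct, dotProduct_smul, smul_eq_mul]
      rw [hzXv, hzz, dotProduct_comm v z]
      ring
    have hZv : (Matrix.of fun a b => z a * z b) *ᵥ v = (z ⬝ᵥ v) • z := by
      ext i
      simp only [Matrix.mulVec, dotProduct, Matrix.of_apply, Pi.smul_apply, smul_eq_mul]
      rw [Finset.sum_mul]
      exact Finset.sum_congr rfl fun j _ => by ring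
    rw [Matrix.sub_mulVec, Matrix.smul_mulVec, hZv, dotProduct_sub,
      dotProduct_smul, dotProduct_smul, smul_eq_mul, smul_eq_mul,
      dotProduct_comm v z]
    rw [hexp] at h0
    linarith

open Matrix in
private lemma psd_lmax_one_sub {p : ℕ} (hp : 0 < p) {A : Matrix (Fin p) (Fin p) ℝ}
    (hA : A.IsSymm) : (lambdaMax A • (1 : Matrix (Fin p) (Fin p) ℝ) - A).PosSemidef := by
  have hAH : A.IsHermitian := by
    rw [Matrix.IsHermitian, Matrix.conjTranspose_eq_transpose_of_trivial]; exact hA.eq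
  refine Matrix.PosSemidef.of_dotProduct_mulVec_nonneg ?_ ?_
  · rw [Matrix.IsHermitian, Matrix.conjTranspose_eq_transpose_of_trivial, Matrix.transpose_sub,
      Matrix.transpose_smul, Matrix.transpose_one, hA.eq]
  · intro x
    rw [star_trivial, Matrix.sub_mulVec, Matrix.smul_mulVec, Matrix.one_mulVec,
      dotProduct_sub, dotProduct_smul, smul_eq_mul]
    have := rayleigh_le hp hAH x
    linarith

/-- inequality (6.1): for a real symmetric `A` and a PSD trace-one `X` with
largest eigenvalue `λ₁` and corresponding unit eigenvector `ẑ`,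
`⟨A,X⟩ ≤ λ₁·ẑᵀAẑ + (1-λ₁)·λ_max(A)`. -/
theorem stmt_18 (p : ℕ) (A X : Matrix (Fin p) (Fin p) ℝ)
    (hA : A.IsSymm) (hX : X.PosSemidef) (hXtr : X.trace = 1)
    (zhat : Fin p → ℝ) (hzhat : (∑ i, zhat i ^ 2) = 1)
    (heig : X.mulVec zhat = lambdaMax X • zhat) :
    frobInner A X
      ≤ lambdaMax X * (∑ a, ∑ b, zhat a * A a b * zhat b)
        + (1 - lambdaMax X) * lambdaMax A := by
  classical
  have hp : 0 < p := by
    rcases Nat.eq_zero_or_pos p with rfl | h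
    · simp at hzhat
    · exact h
  have hzz : dotProduct zhat zhat = 1 := by
    simpa [dotProduct, sq] using hzhat
  set Z : Matrix (Fin p) (Fin p) ℝ := Matrix.of fun a b => zhat a * zhat b with hZ
  set l := lambdaMax X with hl
  set m := lambdaMax A with hm
  set Y := X - l • Z with hY
  have hYpsd : Y.PosSemidef := psd_sub_spike hX hzz heig
  have hMpsd := psd_lmax_one_sub hp hA
  have hfrob := frob_psd_nonneg hMpsd hYpsd
  have hYapply : ∀ i j, Y i j = X i j - l * (zhat i * zhat j) := by
    intro i j
    simp [hY, hZ, Matrix.sub_apply, Matrix.smul_apply, smul_eq_mul]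
  have hdiag : ∑ i, X i i = 1 := by simpa [Matrix.trace, Matrix.diag] using hXtr
  have hzsum : ∑ i, zhat i * zhat i = 1 := by simpa [dotProduct] using hzz
  have htrY : ∑ i, Y i i = 1 - l := by
    simp only [hYapply]
    rw [Finset.sum_sub_distrib, hdiag, ← Finset.mul_sum, hzsum, mul_one]
  have hMY : ∑ i, ∑ j, (m • (1 : Matrix (Fin p) (Fin p) ℝ) - A) i j * Y i j
      = m * (∑ i, Y i i) - ∑ i, ∑ j, A i j * Y i j := by
    rw [Finset.mul_sum, ← Finset.sum_sub_distrib]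
    refine Finset.sum_congr rfl fun i _ => ?_
    simp [Matrix.sub_apply, Matrix.smul_apply, Matrix.one_apply, smul_eq_mul, sub_mul,
      mul_ite, mul_zero, ite_mul, zero_mul, mul_one, Finset.sum_sub_distrib,
      Finset.sum_ite_eq, Finset.mem_univ]
  have hsplit : frobInner A X = (∑ i, ∑ j, A i j * Y i j)
      + l * (∑ a, ∑ b, zhat a * A a b * zhat b) := by
    simp only [frobInner]
    rw [Finset.mul_sum, ← Finset.sum_add_distrib]
    refine Finset.sum_congr rfl fun i _ => ?_
    rw [Finset.mul_sum, ← Finset.sum_add_distrib]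
    refine Finset.sum_congr rfl fun j _ => ?_
    rw [hYapply i j]; ring
  rw [hsplit]
  rw [hMY, htrY] at hfrob
  linarith
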